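/- Let 0 < δ < 1, let η_n > 0 be a sequence with η_n → 0 and n^{1/2} η_n → e for some e with 0 ≤ e < ∞, and for each n let a_{n,S}*, a_{n,H}*, a_{n,A}* be the unique nonnegative solutions of Φ(n^{1/2}(a − η_n)) − Φ(n^{1/2}(−a − η_n)) = δ, Φ(n^{1/2}(a − η_n)) − Φ(−n^{1/2} a) = δ, and Φ(n^{1/2}(a − η_n)) − Φ(−n^{1/2} sqrt(a² + η_n²)) = δ, respectively. Then n^{1/2} a_{n,S}* converges to the unique solution of Φ(a − e) − Φ(−a − e) = δ, n^{1/2} a_{n,H}* converges to the unique solution of Φ(a − e) − Φ(−a) = δ, and n^{1/2} a_{n,A}* converges to the unique solution of Φ(sqrt(a² + e²)) − Φ(−a + e) = δ. -/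

import Mathlib

open MeasureTheory ProbabilityTheory Filter
open scoped NNReal

/-- Standard normal cumulative distribution function Φ. -/
noncomputable def stdNormCDF (x : ℝ) : ℝ :=
  ((gaussianReal 0 1) (Set.Iic x)).toReal

/-- Soft-thresholding (LASSO) estimator with threshold η, as a function of ȳ. -/
noncomputable def softThresh (η y : ℝ) : ℝ := Real.sign y * max (|y| - η) 0

/-- Hard-thresholding estimator with threshold η, as a function of ȳ. -/
noncomputable def hardThresh (η y : ℝ) : ℝ := if η < |y| then y else 0

/-- Adaptive LASSO estimator with tuning parameter η, as a function of ȳ. -/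
noncomputable def adaLasso (η y : ℝ) : ℝ := if |y| ≤ η then 0 else y - η ^ 2 / y

/-- Coverage probability `P_{n,θ}(θ ∈ [est(ȳ) - a, est(ȳ) + b])` in the
known-variance case (σ = 1), where ȳ ~ N(θ, 1/n). -/
noncomputable def cover (n : ℕ) (est : ℝ → ℝ) (a b θ : ℝ) : ℝ :=
  ((gaussianReal θ ((n : ℝ≥0))⁻¹)
    {y : ℝ | est y - a ≤ θ ∧ θ ≤ est y + b}).toReal

open scoped Topology

lemma stdNormCDF_eq_cdf (x : ℝ) : stdNormCDF x = cdf (gaussianReal 0 1) x :=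
  (cdf_eq_real _ x).symm

lemma stdNormCDF_tendsto_atTop : Tendsto stdNormCDF atTop (𝓝 1) := by
  have := tendsto_cdf_atTop (gaussianReal 0 1)
  refine this.congr fun x => (stdNormCDF_eq_cdf x).symm

lemma stdNormCDF_tendsto_atBot : Tendsto stdNormCDF atBot (𝓝 0) := by
  have := tendsto_cdf_atBot (gaussianReal 0 1)
  refine this.congr fun x => (stdNormCDF_eq_cdf x).symm

lemma stdNormCDF_sub_eq (x y : ℝ) (h : x ≤ y) :
    stdNormCDF y - stdNormCDF x = ∫ t in x..y, gaussianPDFReal 0 1 t := by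
  have hone : (1 : ℝ≥0) ≠ 0 := one_ne_zero
  have hmeas : gaussianReal 0 1 (Set.Ioc x y)
      = ENNReal.ofReal (∫ t in Set.Ioc x y, gaussianPDFReal 0 1 t) :=
    gaussianReal_apply_eq_integral 0 hone _
  have hsplit : gaussianReal 0 1 (Set.Iic y)
      = gaussianReal 0 1 (Set.Iic x) + gaussianReal 0 1 (Set.Ioc x y) := by
    rw [← Set.Iic_union_Ioc_eq_Iic h, measure_union (Set.Iic_disjoint_Ioc le_rfl) measurableSet_Ioc]
  have hfin : ∀ s : Set ℝ, gaussianReal 0 1 s ≠ ⊤ := fun s => measure_ne_top _ s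
  rw [stdNormCDF, stdNormCDF, hsplit, ENNReal.toReal_add (hfin _) (hfin _)]
  rw [hmeas, ENNReal.toReal_ofReal (setIntegral_nonneg measurableSet_Ioc
    (fun t _ => gaussianPDFReal_nonneg 0 1 t)), intervalIntegral.integral_of_le h]
  ring

lemma stdNormCDF_eq_add (y : ℝ) :
    stdNormCDF y = stdNormCDF 0 + ∫ t in (0:ℝ)..y, gaussianPDFReal 0 1 t := by
  rcases le_total 0 y with h | h
  · have := stdNormCDF_sub_eq 0 y h; linarith
  · have := stdNormCDF_sub_eq y 0 h
    rw [intervalIntegral.integral_symm 0 y] at this; linarith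

lemma stdNormCDF_continuous : Continuous stdNormCDF := by
  have : Continuous fun y : ℝ => stdNormCDF 0 + ∫ t in (0:ℝ)..y, gaussianPDFReal 0 1 t :=
    continuous_const.add ((integrable_gaussianPDFReal 0 1).continuous_primitive 0)
  exact this.congr fun y => (stdNormCDF_eq_add y).symm

lemma stdNormCDF_strictMono : StrictMono stdNormCDF := by
  intro x y hxy
  have hpos : 0 < ∫ t in x..y, gaussianPDFReal 0 1 t :=
    intervalIntegral.intervalIntegral_pos_of_pos ((integrable_gaussianPDFReal 0 1).intervalIntegrable)
      (fun t => gaussianPDFReal_pos 0 1 t one_ne_zero) hxy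
  have := stdNormCDF_sub_eq x y hxy.le
  linarith

lemma stdNormCDF_neg (x : ℝ) : stdNormCDF (-x) = 1 - stdNormCDF x := by
  have hmap : (gaussianReal 0 1).map (fun y : ℝ => (-1) * y) = gaussianReal 0 1 := by
    rw [gaussianReal_map_const_mul (-1 : ℝ)]
    norm_num
  have hpre : (fun y : ℝ => (-1) * y) ⁻¹' (Set.Iic (-x)) = Set.Ici x := by
    ext y; simp [neg_le]
  have h1 : gaussianReal 0 1 (Set.Iic (-x)) = gaussianReal 0 1 (Set.Ici x) := by
    conv_lhs => rw [← hmap]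
    rw [Measure.map_apply (measurable_const_mul _) measurableSet_Iic, hpre]
  have hatom : gaussianReal 0 1 {x} = 0 :=
    gaussianReal_absolutelyContinuous 0 one_ne_zero (measure_singleton x)
  have h2 : gaussianReal 0 1 (Set.Ici x) = gaussianReal 0 1 (Set.Ioi x) := by
    rw [← Set.Ioi_union_left, measure_union (by simp) (measurableSet_singleton x), hatom, add_zero]
  have h3 : gaussianReal 0 1 (Set.Iic x) + gaussianReal 0 1 (Set.Ioi x) = 1 := by
    rw [← measure_union (Set.Iic_disjoint_Ioi le_rfl) measurableSet_Ioi,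
      Set.Iic_union_Ioi, measure_univ]
  have hfin : ∀ s : Set ℝ, gaussianReal 0 1 s ≠ ⊤ := fun s => measure_ne_top _ s
  have h3' : stdNormCDF x + (gaussianReal 0 1 (Set.Ioi x)).toReal = 1 := by
    rw [stdNormCDF, ← ENNReal.toReal_add (hfin _) (hfin _), h3, ENNReal.toReal_one]
  rw [stdNormCDF, h1, h2]
  linarith


lemma exists_root (δ : ℝ) (hδ0 : 0 < δ) (hδ1 : δ < 1) (h : ℝ → ℝ) (hcont : Continuous h)
    (h0 : h 0 ≤ 0) (htop : Tendsto h atTop (𝓝 1)) :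
    ∃ L, 0 < L ∧ h L = δ := by
  obtain ⟨M, hM⟩ := ((htop.eventually_const_lt hδ1).and (eventually_ge_atTop (0:ℝ))).exists
  obtain ⟨L, hLmem, hLeq⟩ := intermediate_value_Icc hM.2 hcont.continuousOn
    ⟨le_trans h0 hδ0.le, hM.1.le⟩
  refine ⟨L, ?_, hLeq⟩
  rcases hLmem.1.lt_or_eq with h' | h'
  · exact h'
  · exfalso; rw [h', hLeq] at h0; linarith

lemma conv_aux (δ : ℝ) (g : ℝ → ℝ → ℝ) (c b : ℕ → ℝ) (e L : ℝ)
    (hc : Tendsto c atTop (𝓝 e))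
    (hb0 : ∀ n, 0 ≤ b n) (hL0 : 0 < L) (hLδ : g e L = δ)
    (hmono : ∀ c', StrictMonoOn (g c') (Set.Ici 0))
    (hcont : ∀ b', Continuous (fun c' => g c' b'))
    (heq : ∀ n, 1 ≤ n → g (c n) (b n) = δ) :
    Tendsto b atTop (𝓝 L) := by
  rw [Metric.tendsto_atTop]
  intro ε hε
  set ε' := min ε (L / 2) with hε'def
  have hε'0 : 0 < ε' := lt_min hε (by linarith)
  have hε'L : ε' ≤ L / 2 := min_le_right _ _
  have hLm : (0:ℝ) ≤ L - ε' := by linarith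
  have h1 : g e (L - ε') < δ := by
    rw [← hLδ]
    exact hmono e (Set.mem_Ici.2 hLm) (Set.mem_Ici.2 hL0.le) (by linarith)
  have h2 : δ < g e (L + ε') := by
    rw [← hLδ]
    exact hmono e (Set.mem_Ici.2 hL0.le) (Set.mem_Ici.2 (by linarith)) (by linarith)
  have e1 : ∀ᶠ n in atTop, g (c n) (L - ε') < δ :=
    (((hcont (L - ε')).tendsto e).comp hc).eventually_lt_const h1
  have e2 : ∀ᶠ n in atTop, δ < g (c n) (L + ε') :=
    (((hcont (L + ε')).tendsto e).comp hc).eventually_const_lt h2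
  obtain ⟨N, hN⟩ := ((e1.and e2).and (eventually_ge_atTop 1)).exists_forall_of_atTop
  refine ⟨N, fun n hn => ?_⟩
  obtain ⟨⟨hn1, hn2⟩, hn3⟩ := hN n hn
  have hδn := heq n hn3
  have hlow : L - ε' < b n := by
    by_contra hcon
    push_neg at hcon
    have := (hmono (c n)).monotoneOn (Set.mem_Ici.2 (hb0 n)) (Set.mem_Ici.2 hLm) hcon
    rw [hδn] at this
    linarith
  have hhigh : b n < L + ε' := by
    by_contra hcon
    push_neg at hcon
    have := (hmono (c n)).monotoneOn (Set.mem_Ici.2 (by linarith : (0:ℝ) ≤ L + ε'))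
      (Set.mem_Ici.2 (hb0 n)) hcon
    rw [hδn] at this
    linarith
  rw [Real.dist_eq, abs_sub_lt_iff]
  constructor
  · have := min_le_left ε (L / 2); linarith
  · have := min_le_left ε (L / 2); linarith

lemma phi_sub_tendsto (k : ℝ) : Tendsto (fun b : ℝ => stdNormCDF (b - k)) atTop (𝓝 1) := by
  have h1 : Tendsto (fun b : ℝ => b - k) atTop atTop := by
    have h2 := tendsto_atTop_add_const_right atTop (-k) (tendsto_id (α := ℝ) (x := atTop))
    simpa [sub_eq_add_neg] using h2
  exact stdNormCDF_tendsto_atTop.comp h1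

lemma phi_neg_sub_tendsto (k : ℝ) :
    Tendsto (fun b : ℝ => stdNormCDF (-b - k)) atTop (𝓝 0) := by
  have h1 : Tendsto (fun b : ℝ => -b - k) atTop atBot := by
    have h2 : Tendsto (fun b : ℝ => -(b + k)) atTop atBot :=
      tendsto_neg_atTop_atBot.comp (tendsto_atTop_add_const_right atTop k tendsto_id)
    exact h2.congr fun b => by ring
  exact stdNormCDF_tendsto_atBot.comp h1

lemma phi_neg_sqrt_tendsto (k : ℝ) :
    Tendsto (fun b : ℝ => stdNormCDF (-Real.sqrt (b ^ 2 + k ^ 2))) atTop (𝓝 0) := by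
  have hsq : Tendsto (fun b : ℝ => Real.sqrt (b ^ 2 + k ^ 2)) atTop atTop := by
    refine tendsto_atTop_mono' atTop ?_ tendsto_id
    filter_upwards [eventually_ge_atTop (0:ℝ)] with b hb
    calc b = Real.sqrt (b ^ 2) := by rw [Real.sqrt_sq hb]
    _ ≤ Real.sqrt (b ^ 2 + k ^ 2) := Real.sqrt_le_sqrt (by nlinarith)
  exact stdNormCDF_tendsto_atBot.comp (tendsto_neg_atTop_atBot.comp hsq)


/-- Asymptotic behavior of the half-lengths of the shortest δ-level intervals in the
conservative-tuning regime `η_n → 0`, `√n η_n → e`, `0 ≤ e < ∞`. -/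
theorem stmt_10 (δ : ℝ) (hδ0 : 0 < δ) (hδ1 : δ < 1) (η : ℕ → ℝ) (hη : ∀ n, 0 < η n)
    (e : ℝ) (he : 0 ≤ e) (hη0 : Tendsto η atTop (nhds 0))
    (hηe : Tendsto (fun n : ℕ => Real.sqrt n * η n) atTop (nhds e))
    (aS aH aA : ℕ → ℝ)
    (haS : ∀ n, 0 ≤ aS n) (haH : ∀ n, 0 ≤ aH n) (haA : ∀ n, 0 ≤ aA n)
    (heqS : ∀ n : ℕ, 1 ≤ n →
      stdNormCDF (Real.sqrt n * (aS n - η n)) -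
        stdNormCDF (Real.sqrt n * (-aS n - η n)) = δ)
    (heqH : ∀ n : ℕ, 1 ≤ n →
      stdNormCDF (Real.sqrt n * (aH n - η n)) - stdNormCDF (-(Real.sqrt n * aH n)) = δ)
    (heqA : ∀ n : ℕ, 1 ≤ n →
      stdNormCDF (Real.sqrt n * (aA n - η n)) -
        stdNormCDF (-(Real.sqrt n * Real.sqrt (aA n ^ 2 + η n ^ 2))) = δ) :
    (∃ L : ℝ, (stdNormCDF (L - e) - stdNormCDF (-L - e) = δ ∧
        ∀ L' : ℝ, stdNormCDF (L' - e) - stdNormCDF (-L' - e) = δ → L' = L) ∧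
      Tendsto (fun n : ℕ => Real.sqrt n * aS n) atTop (nhds L)) ∧
    (∃ L : ℝ, (stdNormCDF (L - e) - stdNormCDF (-L) = δ ∧
        ∀ L' : ℝ, stdNormCDF (L' - e) - stdNormCDF (-L') = δ → L' = L) ∧
      Tendsto (fun n : ℕ => Real.sqrt n * aH n) atTop (nhds L)) ∧
    (∃ L : ℝ, (stdNormCDF (Real.sqrt (L ^ 2 + e ^ 2)) - stdNormCDF (-L + e) = δ ∧
        ∀ L' : ℝ, stdNormCDF (Real.sqrt (L' ^ 2 + e ^ 2)) - stdNormCDF (-L' + e) = δ →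
          L' = L) ∧
      Tendsto (fun n : ℕ => Real.sqrt n * aA n) atTop (nhds L)) := by
  have hΦmono := stdNormCDF_strictMono
  refine ⟨?_, ?_, ?_⟩
  -- soft
  · set g : ℝ → ℝ → ℝ := fun c b => stdNormCDF (b - c) - stdNormCDF (-b - c) with hg
    have hmono : ∀ c', StrictMonoOn (g c') (Set.Ici 0) := by
      intro c' x _ y _ hxy
      have h1 := hΦmono (show x - c' < y - c' by linarith)
      have h2 := hΦmono (show -y - c' < -x - c' by linarith)
      simp only [hg]; linarith
    have hmonoR : StrictMono (g e) := by
      intro x y hxy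
      have h1 := hΦmono (show x - e < y - e by linarith)
      have h2 := hΦmono (show -y - e < -x - e by linarith)
      simp only [hg]; linarith
    have hcont : ∀ b', Continuous (fun c' => g c' b') :=
      fun b' => (stdNormCDF_continuous.comp (continuous_const.sub continuous_id)).sub
        (stdNormCDF_continuous.comp (continuous_const.sub continuous_id))
    have h0 : g e 0 ≤ 0 := by simp [hg]
    have htop : Tendsto (g e) atTop (𝓝 1) := by
      have h := (phi_sub_tendsto e).sub (phi_neg_sub_tendsto e)
      simp only [hg]
      simpa using h
    obtain ⟨L, hL0, hLδ⟩ := exists_root δ hδ0 hδ1 (g e)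
      ((stdNormCDF_continuous.comp (continuous_id.sub continuous_const)).sub
        (stdNormCDF_continuous.comp ((continuous_neg).sub continuous_const))) h0 htop
    refine ⟨L, ⟨hLδ, fun L' hL' => ?_⟩, ?_⟩
    · have hL'g : g e L' = δ := by simp only [hg]; exact hL'
      exact hmonoR.injective (hL'g.trans hLδ.symm)
    refine conv_aux δ g (fun n => Real.sqrt n * η n) (fun n => Real.sqrt n * aS n) e L hηe
      (fun n => mul_nonneg (Real.sqrt_nonneg _) (haS n)) hL0 hLδ hmono hcont ?_
    intro n hn
    have h1 : Real.sqrt n * (aS n - η n) = Real.sqrt n * aS n - Real.sqrt n * η n := by ring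
    have h2 : Real.sqrt n * (-aS n - η n) = -(Real.sqrt n * aS n) - Real.sqrt n * η n := by ring
    have := heqS n hn
    rw [h1, h2] at this
    exact this
  -- hard
  · set g : ℝ → ℝ → ℝ := fun c b => stdNormCDF (b - c) - stdNormCDF (-b) with hg
    have hmono : ∀ c', StrictMonoOn (g c') (Set.Ici 0) := by
      intro c' x _ y _ hxy
      have h1 := hΦmono (show x - c' < y - c' by linarith)
      have h2 := hΦmono (show -y < -x by linarith)
      simp only [hg]; linarith
    have hmonoR : StrictMono (g e) := by
      intro x y hxy
      have h1 := hΦmono (show x - e < y - e by linarith)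
      have h2 := hΦmono (show -y < -x by linarith)
      simp only [hg]; linarith
    have hcont : ∀ b', Continuous (fun c' => g c' b') :=
      fun b' => (stdNormCDF_continuous.comp (continuous_const.sub continuous_id)).sub
        continuous_const
    have h0 : g e 0 ≤ 0 := by
      have : stdNormCDF (0 - e) ≤ stdNormCDF (-0) := by
        apply hΦmono.monotone; simp [he]
      simp only [hg]; linarith
    have htop : Tendsto (g e) atTop (𝓝 1) := by
      have h := (phi_sub_tendsto e).sub (phi_neg_sub_tendsto 0)
      simp only [sub_zero] at h
      simp only [hg]
      simpa using h
    obtain ⟨L, hL0, hLδ⟩ := exists_root δ hδ0 hδ1 (g e)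
      ((stdNormCDF_continuous.comp (continuous_id.sub continuous_const)).sub
        (stdNormCDF_continuous.comp continuous_neg)) h0 htop
    refine ⟨L, ⟨hLδ, fun L' hL' => ?_⟩, ?_⟩
    · have hL'g : g e L' = δ := by simp only [hg]; exact hL'
      exact hmonoR.injective (hL'g.trans hLδ.symm)
    refine conv_aux δ g (fun n => Real.sqrt n * η n) (fun n => Real.sqrt n * aH n) e L hηe
      (fun n => mul_nonneg (Real.sqrt_nonneg _) (haH n)) hL0 hLδ hmono hcont ?_
    intro n hn
    have h1 : Real.sqrt n * (aH n - η n) = Real.sqrt n * aH n - Real.sqrt n * η n := by ring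
    have := heqH n hn
    rw [h1] at this
    exact this
  -- adaptive
  · set g : ℝ → ℝ → ℝ := fun c b => stdNormCDF (b - c) -
      stdNormCDF (-Real.sqrt (b ^ 2 + c ^ 2)) with hg
    have hbridge : ∀ x : ℝ,
        g e x = stdNormCDF (Real.sqrt (x ^ 2 + e ^ 2)) - stdNormCDF (-x + e) := by
      intro x
      have h1 := stdNormCDF_neg (x - e)
      have h2 := stdNormCDF_neg (Real.sqrt (x ^ 2 + e ^ 2))
      have h3 : -(x - e) = -x + e := by ring
      rw [h3] at h1
      simp only [hg]; linarith
    have hmono : ∀ c', StrictMonoOn (g c') (Set.Ici 0) := by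
      intro c' x hx y _ hxy
      have hx0 : (0:ℝ) ≤ x := hx
      have h1 := hΦmono (show x - c' < y - c' by linarith)
      have h2 : stdNormCDF (-Real.sqrt (y ^ 2 + c' ^ 2)) ≤
          stdNormCDF (-Real.sqrt (x ^ 2 + c' ^ 2)) := by
        apply hΦmono.monotone
        have := Real.sqrt_le_sqrt (show x ^ 2 + c' ^ 2 ≤ y ^ 2 + c' ^ 2 by nlinarith)
        linarith
      simp only [hg]; linarith
    have hcont : ∀ b', Continuous (fun c' => g c' b') := by
      intro b'
      refine (stdNormCDF_continuous.comp (continuous_const.sub continuous_id)).sub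
        (stdNormCDF_continuous.comp (continuous_neg.comp
          (Real.continuous_sqrt.comp (continuous_const.add (continuous_pow 2)))))
    have h0 : g e 0 ≤ 0 := by
      simp only [hg]
      rw [show (0:ℝ)^2 + e^2 = e^2 by ring, Real.sqrt_sq he]
      simp
    have htop : Tendsto (g e) atTop (𝓝 1) := by
      have h := (phi_sub_tendsto e).sub (phi_neg_sqrt_tendsto e)
      simp only [hg]
      simpa using h
    have hcontR : Continuous (g e) :=
      (stdNormCDF_continuous.comp (continuous_id.sub continuous_const)).sub
        (stdNormCDF_continuous.comp (continuous_neg.comp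
          (Real.continuous_sqrt.comp ((continuous_pow 2).add continuous_const))))
    obtain ⟨L, hL0, hLδ⟩ := exists_root δ hδ0 hδ1 (g e) hcontR h0 htop
    have huniq : ∀ L' : ℝ,
        stdNormCDF (Real.sqrt (L' ^ 2 + e ^ 2)) - stdNormCDF (-L' + e) = δ → L' = L := by
      intro L' hL'
      have hgL' : g e L' = δ := by rw [hbridge]; exact hL'
      have hL'pos : 0 < L' := by
        by_contra hcon
        push_neg at hcon
        have hle : Real.sqrt (L' ^ 2 + e ^ 2) ≤ e - L' := by
          have h1 : L' ^ 2 + e ^ 2 ≤ (e - L') ^ 2 := by nlinarith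
          calc Real.sqrt (L' ^ 2 + e ^ 2) ≤ Real.sqrt ((e - L') ^ 2) := Real.sqrt_le_sqrt h1
          _ = e - L' := Real.sqrt_sq (by linarith)
        have : stdNormCDF (Real.sqrt (L' ^ 2 + e ^ 2)) ≤ stdNormCDF (-L' + e) := by
          apply hΦmono.monotone; linarith
        linarith
      exact (hmono e).injOn (Set.mem_Ici.2 hL'pos.le) (Set.mem_Ici.2 hL0.le)
        (by rw [hgL', hLδ])
    refine ⟨L, ⟨by rw [← hbridge]; exact hLδ, huniq⟩, ?_⟩
    refine conv_aux δ g (fun n => Real.sqrt n * η n) (fun n => Real.sqrt n * aA n) e L hηe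
      (fun n => mul_nonneg (Real.sqrt_nonneg _) (haA n)) hL0 hLδ hmono hcont ?_
    intro n hn
    have h1 : Real.sqrt n * (aA n - η n) = Real.sqrt n * aA n - Real.sqrt n * η n := by ring
    have h2 : Real.sqrt n * Real.sqrt (aA n ^ 2 + η n ^ 2)
        = Real.sqrt ((Real.sqrt n * aA n) ^ 2 + (Real.sqrt n * η n) ^ 2) := by
      have hn0 : (0:ℝ) ≤ (n:ℝ) := Nat.cast_nonneg n
      rw [show (Real.sqrt n * aA n) ^ 2 + (Real.sqrt n * η n) ^ 2
          = (Real.sqrt (n:ℝ) * Real.sqrt (n:ℝ)) * (aA n ^ 2 + η n ^ 2) by ring,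
        Real.sqrt_mul (mul_self_nonneg _), Real.sqrt_mul_self (Real.sqrt_nonneg (n:ℝ))]
    have := heqA n hn
    rw [h1, h2] at this
    exact this
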